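/- arXiv:2209.05259 — 6 statements merged into one kernel-verified Lean document; each statement's English description precedes it below -/
import Mathlib

section
/- Let $G$ be a 7-connected graph and let $H$ be a subgraph of $G$ with 8 vertices such that $H$ is obtained from $K_8$ by deleting at most 5 edges. If $G$ has strictly more than 8 vertices, then $G$ has a $\mathcal{K}_9^{-6}$ minor. -/
open SimpleGraph

/-- `H` is a minor of `G`: there is a minor model (branch decomposition) of `H` in `G`. -/
def IsMinorOf {β α : Type*} (H : SimpleGraph β) (G : SimpleGraph α) : Prop :=
  ∃ f : β → Set α,
    (∀ b, (f b).Nonempty) ∧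
    (∀ b, (G.induce (f b)).Connected) ∧
    (Pairwise fun b₁ b₂ => Disjoint (f b₁) (f b₂)) ∧
    (∀ ⦃b₁ b₂⦄, H.Adj b₁ b₂ → ∃ a₁ ∈ f b₁, ∃ a₂ ∈ f b₂, G.Adj a₁ a₂)

/-- `G` has a `𝒦₉⁻⁶` minor: a minor isomorphic to `K₉` with 6 edges deleted,
i.e. a graph on 9 vertices with exactly `36 - 6 = 30` edges. -/
def HasK96Minor {α : Type*} (G : SimpleGraph α) : Prop :=
  ∃ H : SimpleGraph (Fin 9), H.edgeSet.ncard = 30 ∧ IsMinorOf H G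
/-- `G` is `k`-connected: more than `k` vertices, and deleting any set of fewer
than `k` vertices leaves a connected graph. -/
def KConnected {α : Type*} [Fintype α] (k : ℕ) (G : SimpleGraph α) : Prop :=
  k < Fintype.card α ∧ ∀ S : Set α, S.ncard < k → (G.induce Sᶜ).Connected

private lemma induce_singleton_connected' {V : Type*} (G : SimpleGraph V) (x : V) :
    (G.induce {x}).Connected := by
  haveI : Nonempty ({x} : Set V) := ⟨⟨x, rfl⟩⟩
  refine ⟨fun u w => ?_⟩
  have : u = w := Subtype.ext (u.2.trans w.2.symm)
  exact this ▸ Reachable.refl _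

/-- If a 7-connected graph on more than 8 vertices contains a subgraph on 8 vertices
obtained from `K₈` by deleting at most 5 edges (i.e. with at least `28 - 5 = 23` edges),
then it has a `𝒦₉⁻⁶` minor. -/
theorem K8_minus_at_most_5_subgraph_gives_K9_minus6_minor
    {V : Type*} [Fintype V] (G : SimpleGraph V)
    (h7 : KConnected 7 G) (H : SimpleGraph (Fin 8))
    (hH : 23 ≤ H.edgeSet.ncard)
    (f : Fin 8 → V) (hf : Function.Injective f)
    (hhom : ∀ a b, H.Adj a b → G.Adj (f a) (f b))
    (hcard : 8 < Fintype.card V) :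
    HasK96Minor G := by
  classical
  set W : Set V := Set.range f with hWdef
  -- a vertex not in the image
  obtain ⟨v, hvW⟩ : ∃ v : V, v ∉ W := by
    by_contra h
    push_neg at h
    have hsurj : Function.Surjective f := fun x => h x
    have := Fintype.card_le_of_surjective f hsurj
    simp only [Fintype.card_fin] at this
    omega
  -- its "component" away from W
  set C : Set V := {u | ∃ p : G.Walk v u, ∀ x ∈ p.support, x ∉ W} with hCdef
  have hvC : v ∈ C := ⟨Walk.nil, by simpa using hvW⟩
  have hCW : ∀ u ∈ C, u ∉ W := by
    rintro u ⟨p, hp⟩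
    exact hp u p.end_mem_support
  have hclose : ∀ u ∈ C, ∀ y, y ∉ W → G.Adj u y → y ∈ C := by
    rintro u ⟨p, hp⟩ y hy hadj
    refine ⟨p.concat hadj, fun x hx => ?_⟩
    rw [Walk.support_concat] at hx
    have hx' : x ∈ p.support ∨ x = y := by simpa using hx
    rcases hx' with h | h
    · exact hp x h
    · exact h ▸ hy
  have hCconn : (G.induce C).Connected := by
    apply G.induce_connected_of_patches v hvC
    rintro u ⟨p, hp⟩
    refine ⟨{y | y ∈ p.support}, ?_, p.start_mem_support, p.end_mem_support, ?_⟩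
    · intro x hx
      exact ⟨p.takeUntil x hx, fun z hz => hp z (p.support_takeUntil_subset hx hz)⟩
    · exact (p.connected_induce_support).preconnected _ _
  -- the neighborhood of C in the image has at least 7 elements
  set N : Set (Fin 8) := {i | ∃ u ∈ C, G.Adj u (f i)} with hNdef
  have hN7 : 7 ≤ N.ncard := by
    by_contra h
    push_neg at h
    have hS : (f '' N).ncard < 7 := by
      rwa [Set.ncard_image_of_injective _ hf]
    have hconn := h7.2 (f '' N) hS
    obtain ⟨j, hjN⟩ : ∃ j, j ∉ N := by
      by_contra h'
      push_neg at h'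
      have : N = Set.univ := Set.eq_univ_of_forall h'
      rw [this, Set.ncard_univ] at h
      simp at h
    have hvS : v ∈ (f '' N)ᶜ := by
      intro hmem
      exact hvW (Set.image_subset_range f N hmem)
    have hjS : f j ∈ (f '' N)ᶜ := by
      rintro ⟨i, hi, hfi⟩
      exact hjN (hf hfi ▸ hi)
    obtain ⟨q⟩ := hconn.preconnected ⟨v, hvS⟩ ⟨f j, hjS⟩
    have key : ∀ (a b : ↥(f '' N)ᶜ) (q : (G.induce (f '' N)ᶜ).Walk a b),
        a.val ∈ C → b.val ∈ W → False := by
      intro a b q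
      induction q with
      | nil => exact fun ha hb => hCW _ ha hb
      | @cons a c b' hadj q ih =>
        intro ha hb
        have hGadj : G.Adj a.val c.val := hadj
        by_cases hx : (c : V) ∈ W
        · obtain ⟨i, hi⟩ := hx
          have hiN : i ∈ N := ⟨a.val, ha, hi ▸ hGadj⟩
          exact c.2 ⟨i, hiN, hi⟩
        · exact ih (hclose _ ha _ hx hGadj) hb
    exact key _ _ q hvC ⟨j, rfl⟩
  -- basic edge counts
  have hNfin : N.Finite := Set.toFinite _
  have hEfin : H.edgeSet.Finite := Set.toFinite _
  have he28 : H.edgeSet.ncard ≤ 28 := by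
    have hle : H.edgeSet.ncard ≤ ((⊤ : SimpleGraph (Fin 8)).edgeSet).ncard :=
      Set.ncard_le_ncard (edgeSet_mono le_top) (Set.toFinite _)
    have htop : ((⊤ : SimpleGraph (Fin 8)).edgeSet).ncard = 28 := by
      rw [Set.ncard_eq_toFinset_card']
      decide
    omega
  set e := H.edgeSet.ncard with hedef
  set d := 30 - e with hddef
  obtain ⟨D, hDN, hDcard⟩ : ∃ D ⊆ N, D.ncard = d :=
    Set.exists_subset_card_eq (by omega)
  -- the graph H' on 9 vertices
  set star : Set (Sym2 (Fin 9)) :=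
    (fun i : Fin 8 => s(Fin.last 8, Fin.castSucc i)) '' D with hstardef
  set mapped : Set (Sym2 (Fin 9)) := Sym2.map Fin.castSucc '' H.edgeSet with hmapdef
  set H' : SimpleGraph (Fin 9) := fromEdgeSet (mapped ∪ star) with hH'def
  have hlast_ne : ∀ i : Fin 8, Fin.last 8 ≠ Fin.castSucc i := by
    intro i h
    exact absurd h.symm (Fin.castSucc_lt_last i).ne
  have hnodiag : ∀ x ∈ mapped ∪ star, ¬ x.IsDiag := by
    rintro x (⟨e0, he0, rfl⟩ | ⟨i, _, rfl⟩)
    · induction e0 with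
      | _ a b =>
        have : a ≠ b := (H.mem_edgeSet.mp he0).ne
        simpa using fun h => this (Fin.castSucc_injective _ h)
    · simpa using hlast_ne i
  have hES : H'.edgeSet = mapped ∪ star := by
    rw [hH'def, edgeSet_fromEdgeSet]
    ext x
    simp only [Set.mem_diff, Set.mem_setOf_eq, and_iff_left_iff_imp]
    exact fun hx => hnodiag x hx
  have hdisj : Disjoint mapped star := by
    rw [Set.disjoint_left]
    rintro x ⟨e0, he0, rfl⟩ ⟨i, _, hx⟩
    induction e0 with
    | _ a b =>
      rw [Sym2.map_pair_eq] at hx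
      have hmem : Fin.last 8 ∈ s(Fin.castSucc a, Fin.castSucc b) := hx ▸ Sym2.mem_mk_left _ _
      rcases Sym2.mem_iff.mp hmem with h | h
      · exact hlast_ne a h
      · exact hlast_ne b h
  have hmcard : mapped.ncard = e := by
    rw [hmapdef, Set.ncard_image_of_injective _ (Sym2.map.injective (Fin.castSucc_injective _))]
  have hscard : star.ncard = d := by
    rw [hstardef, Set.ncard_image_of_injOn, hDcard]
    intro i _ j _ hij
    rcases Sym2.eq_iff.mp hij with ⟨_, h2⟩ | ⟨h1, _⟩
    · exact Fin.castSucc_injective _ h2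
    · exact absurd h1 (hlast_ne j)
  have hcount : H'.edgeSet.ncard = 30 := by
    rw [hES, Set.ncard_union_eq hdisj (hEfin.image _) ((hNfin.subset hDN).image _),
      hmcard, hscard]
    omega
  -- the minor model
  set g : Fin 9 → Set V := Fin.lastCases C (fun i => {f i}) with hgdef
  have hg1 : g (Fin.last 8) = C := by simp only [hgdef, Fin.lastCases_last]
  have hg2 : ∀ i : Fin 8, g (Fin.castSucc i) = {f i} := fun i => by
    simp [hgdef, Fin.lastCases_castSucc]
  refine ⟨H', hcount, g, ?_, ?_, ?_, ?_⟩
  · intro b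
    induction b using Fin.lastCases with
    | last => exact hg1 ▸ ⟨v, hvC⟩
    | cast i => exact (hg2 i) ▸ ⟨f i, rfl⟩
  · intro b
    induction b using Fin.lastCases with
    | last => rw [hg1]; exact hCconn
    | cast i =>
      rw [hg2 i]
      exact induce_singleton_connected' G (f i)
  · intro b₁ b₂ hne
    induction b₁ using Fin.lastCases with
    | last =>
      induction b₂ using Fin.lastCases with
      | last => exact absurd rfl hne
      | cast j =>
        rw [hg1, hg2 j, Set.disjoint_singleton_right]
        exact fun h => hCW _ h ⟨j, rfl⟩
    | cast i =>
      induction b₂ using Fin.lastCases with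
      | last =>
        rw [hg1, hg2 i, Set.disjoint_singleton_left]
        exact fun h => hCW _ h ⟨i, rfl⟩
      | cast j =>
        rw [hg2 i, hg2 j, Set.disjoint_singleton_left, Set.mem_singleton_iff]
        intro h
        exact hne (congrArg Fin.castSucc (hf h))
  · intro b₁ b₂ hadj
    rw [hH'def, fromEdgeSet_adj] at hadj
    obtain ⟨hmem, hne⟩ := hadj
    rcases hmem with ⟨e0, he0, hx⟩ | ⟨i, hiD, hx⟩
    · induction e0 with
      | _ a b =>
        have hab : H.Adj a b := H.mem_edgeSet.mp he0
        rw [Sym2.map_pair_eq, Sym2.eq_iff] at hx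
        rcases hx with ⟨h1, h2⟩ | ⟨h1, h2⟩
        · subst h1; subst h2
          exact ⟨f a, by rw [hg2 a]; rfl, f b, by rw [hg2 b]; rfl, hhom a b hab⟩
        · subst h1; subst h2
          exact ⟨f b, by rw [hg2 b]; rfl, f a, by rw [hg2 a]; rfl, hhom b a hab.symm⟩
    · obtain ⟨u, huC, huadj⟩ := hDN hiD
      rcases Sym2.eq_iff.mp hx with ⟨h1, h2⟩ | ⟨h1, h2⟩
      · subst h1; subst h2
        exact ⟨u, by rw [hg1]; exact huC, f i, by rw [hg2 i]; rfl, huadj⟩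
      · subst h1; subst h2
        exact ⟨f i, by rw [hg2 i]; rfl, u, by rw [hg1]; exact huC, huadj.symm⟩
end

section
/- Every simple graph on 9 vertices with independence number at most 2 contains $K_4$ as a subgraph, i.e., contains 4 pairwise adjacent vertices. -/
open SimpleGraph Finset

private lemma ramsey33_aux {V : Type*} [Fintype V] [DecidableEq V]
    (G : SimpleGraph V) [DecidableRel G.Adj] (s : Finset V) (hs : 6 ≤ s.card) :
    ∃ t ⊆ s, t.card = 3 ∧
      ((∀ a ∈ t, ∀ b ∈ t, a ≠ b → G.Adj a b) ∨
       (∀ a ∈ t, ∀ b ∈ t, a ≠ b → ¬ G.Adj a b)) := by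
  have hpos : 0 < s.card := by omega
  obtain ⟨v, hv⟩ := Finset.card_pos.mp hpos
  set u := s.erase v with hu
  have hucard : 5 ≤ u.card := by
    rw [hu, Finset.card_erase_of_mem hv]
    omega
  set A := u.filter (fun x => G.Adj v x) with hA
  set B := u.filter (fun x => ¬ G.Adj v x) with hB
  have hAB : A.card + B.card = u.card := Finset.card_filter_add_card_filter_not _
  have husub : u ⊆ s := Finset.erase_subset _ _
  rcases (by omega : 3 ≤ A.card ∨ 3 ≤ B.card) with hAc | hBc
  · by_cases h : ∃ x ∈ A, ∃ y ∈ A, x ≠ y ∧ G.Adj x y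
    · obtain ⟨x, hx, y, hy, hxy, hadj⟩ := h
      have hvx : G.Adj v x := (Finset.mem_filter.mp hx).2
      have hvy : G.Adj v y := (Finset.mem_filter.mp hy).2
      refine ⟨{v, x, y}, ?_, ?_, Or.inl ?_⟩
      · intro a ha
        simp only [Finset.mem_insert, Finset.mem_singleton] at ha
        rcases ha with rfl | rfl | rfl
        · exact hv
        · exact husub (Finset.mem_of_mem_filter _ hx)
        · exact husub (Finset.mem_of_mem_filter _ hy)
      · rw [Finset.card_insert_of_notMem, Finset.card_insert_of_notMem,
          Finset.card_singleton]
        · simp [hxy]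
        · simp only [Finset.mem_insert, Finset.mem_singleton]
          push_neg
          exact ⟨hvx.ne, hvy.ne⟩
      · intro a ha b hb hab
        simp only [Finset.mem_insert, Finset.mem_singleton] at ha hb
        rcases ha with rfl | rfl | rfl <;> rcases hb with rfl | rfl | rfl <;>
          first
            | exact absurd rfl hab
            | assumption
            | exact G.adj_symm ‹_›
    · push_neg at h
      obtain ⟨t, hts, htc⟩ := Finset.exists_subset_card_eq hAc
      refine ⟨t, fun a ha => husub (Finset.mem_of_mem_filter _ (hts ha)), htc, Or.inr ?_⟩
      intro a ha b hb hab
      exact h a (hts ha) b (hts hb) hab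
  · by_cases h : ∃ x ∈ B, ∃ y ∈ B, x ≠ y ∧ ¬ G.Adj x y
    · obtain ⟨x, hx, y, hy, hxy, hadj⟩ := h
      have hvx : ¬ G.Adj v x := (Finset.mem_filter.mp hx).2
      have hvy : ¬ G.Adj v y := (Finset.mem_filter.mp hy).2
      have hxv : x ≠ v := (Finset.mem_erase.mp (Finset.mem_of_mem_filter _ hx)).1
      have hyv : y ≠ v := (Finset.mem_erase.mp (Finset.mem_of_mem_filter _ hy)).1
      refine ⟨{v, x, y}, ?_, ?_, Or.inr ?_⟩
      · intro a ha
        simp only [Finset.mem_insert, Finset.mem_singleton] at ha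
        rcases ha with rfl | rfl | rfl
        · exact hv
        · exact husub (Finset.mem_of_mem_filter _ hx)
        · exact husub (Finset.mem_of_mem_filter _ hy)
      · rw [Finset.card_insert_of_notMem, Finset.card_insert_of_notMem,
          Finset.card_singleton]
        · simp [hxy]
        · simp only [Finset.mem_insert, Finset.mem_singleton]
          push_neg
          exact ⟨fun e => hxv e.symm, fun e => hyv e.symm⟩
      · intro a ha b hb hab
        simp only [Finset.mem_insert, Finset.mem_singleton] at ha hb
        rcases ha with rfl | rfl | rfl <;> rcases hb with rfl | rfl | rfl <;>
          first
            | exact absurd rfl hab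
            | assumption
            | exact fun hc => ‹¬ _› (G.adj_symm hc)
    · push_neg at h
      obtain ⟨t, hts, htc⟩ := Finset.exists_subset_card_eq hBc
      refine ⟨t, fun a ha => husub (Finset.mem_of_mem_filter _ (hts ha)), htc, Or.inl ?_⟩
      intro a ha b hb hab
      exact h a (hts ha) b (hts hb) hab

/-- Every graph on 9 vertices with independence number at most 2 contains `K₄`
as a subgraph (an instance of `R(4,3) = 9`). -/
theorem K4_of_nine_vertices_indep_le_two
    {V : Type*} [Fintype V] (G : SimpleGraph V)
    (hcard : Fintype.card V = 9)
    (hindep : ∀ s : Finset V, (∀ a ∈ s, ∀ b ∈ s, a ≠ b → ¬ G.Adj a b) → s.card ≤ 2) :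
    ∃ s : Finset V, G.IsNClique 4 s := by
  classical
  -- the two vertices of a non-edge plus a common non-neighbor would give an
  -- independent 3-set; hence non-neighbors of a vertex are pairwise adjacent
  have key : ∀ v a b : V, a ≠ v → b ≠ v → a ≠ b →
      ¬ G.Adj v a → ¬ G.Adj v b → G.Adj a b := by
    intro v a b hav hbv hab hva hvb
    by_contra hnab
    have h3 := hindep {v, a, b} ?_
    · have : ({v, a, b} : Finset V).card = 3 := by
        rw [Finset.card_insert_of_notMem, Finset.card_insert_of_notMem,
          Finset.card_singleton]
        · simp [hab]
        · simp only [Finset.mem_insert, Finset.mem_singleton]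
          push_neg
          exact ⟨fun e => hav e.symm, fun e => hbv e.symm⟩
      omega
    · intro x hx y hy hxy
      simp only [Finset.mem_insert, Finset.mem_singleton] at hx hy
      rcases hx with rfl | rfl | rfl <;> rcases hy with rfl | rfl | rfl <;>
        first
          | exact absurd rfl hxy
          | assumption
          | exact fun hc => ‹¬ _› (G.adj_symm hc)
  -- not every vertex has complement-degree 3 (parity)
  have hne3 : ∃ v : V, Gᶜ.degree v ≠ 3 := by
    by_contra hc
    push_neg at hc
    have h1 := Gᶜ.sum_degrees_eq_twice_card_edges
    rw [Finset.sum_congr rfl fun v _ => hc v, Finset.sum_const, Finset.card_univ,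
      hcard, smul_eq_mul] at h1
    omega
  obtain ⟨v, hv3⟩ := hne3
  rcases Nat.lt_or_ge (Gᶜ.degree v) 3 with hlt | hge
  · -- complement-degree ≤ 2 : v has ≥ 6 neighbors; use R(3,3) among them
    have hdeg : 6 ≤ G.degree v := by
      have h : Gᶜ.degree v = Fintype.card V - 1 - G.degree v := SimpleGraph.degree_compl G v
      have h2 : G.degree v ≤ Fintype.card V - 1 := by
        have := G.degree_lt_card_verts v
        omega
      omega
    obtain ⟨t, hts, htc, hcase⟩ := ramsey33_aux G (G.neighborFinset v)
      (by rwa [G.card_neighborFinset_eq_degree])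
    rcases hcase with hcl | hind
    · -- triangle among neighbors of v: K4 with v
      have hvt : v ∉ t := fun hvt => G.notMem_neighborFinset_self v (hts hvt)
      refine ⟨insert v t, ?_, by rw [Finset.card_insert_of_notMem hvt, htc]⟩
      intro a ha b hb hab
      simp only [Finset.coe_insert, Set.mem_insert_iff, Finset.mem_coe] at ha hb
      rcases ha with rfl | ha <;> rcases hb with rfl | hb
      · exact absurd rfl hab
      · exact G.mem_neighborFinset a b |>.mp (hts hb)
      · exact G.adj_symm (G.mem_neighborFinset b a |>.mp (hts ha))
      · exact hcl a ha b hb hab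
    · -- independent 3-set: contradiction
      have := hindep t hind
      omega
  · have hge4 : 4 ≤ Gᶜ.degree v := by omega
    obtain ⟨t, hts, htc⟩ := Finset.exists_subset_card_eq (s := Gᶜ.neighborFinset v) (n := 4)
      (by rwa [Gᶜ.card_neighborFinset_eq_degree])
    refine ⟨t, ?_, htc⟩
    intro a ha b hb hab
    rw [Finset.mem_coe] at ha hb
    have ha' := (Gᶜ.mem_neighborFinset v a).mp (hts ha)
    have hb' := (Gᶜ.mem_neighborFinset v b).mp (hts hb)
    rw [compl_adj] at ha' hb'
    exact key v a b (Ne.symm ha'.1) (Ne.symm hb'.1) hab ha'.2 hb'.2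
end

section
/- Let $H$ be a simple graph on 8 or 9 vertices with minimum degree at least 5. Then there exists a vertex $v$ of $H$ such that $H \setminus v$ has a $\mathcal{K}_7^{-6}$ minor, i.e., $H \setminus v$ has an $F$ minor for some graph $F$ obtained from $K_7$ by deleting 6 edges. -/
open SimpleGraph

/-- `G` has a `𝒦₇⁻⁶` minor: a minor isomorphic to `K₇` with 6 edges deleted,
i.e. a graph on 7 vertices with exactly `21 - 6 = 15` edges. -/
def HasK76Minor {α : Type*} (G : SimpleGraph α) : Prop :=
  ∃ F : SimpleGraph (Fin 7), F.edgeSet.ncard = 15 ∧ IsMinorOf F G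

open Finset in
lemma connected_singleton {β : Type*} (W : SimpleGraph β) (a : β) :
    (W.induce {x | x = a}).Connected := by
  haveI : Nonempty ({x | x = a} : Set β) := ⟨⟨a, rfl⟩⟩
  refine SimpleGraph.Connected.mk ?_
  intro u v
  have : u = v := by
    ext
    rw [u.2, v.2]
  rw [this]

lemma connected_pair {β : Type*} (W : SimpleGraph β) {a b : β} (hab : W.Adj a b) :
    (W.induce {x | x = a ∨ x = b}).Connected := by
  haveI hne : Nonempty ({x | x = a ∨ x = b} : Set β) := ⟨⟨a, Or.inl rfl⟩⟩
  have ha : a ∈ ({x | x = a ∨ x = b} : Set β) := Or.inl rfl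
  have hb : b ∈ ({x | x = a ∨ x = b} : Set β) := Or.inr rfl
  have key : (W.induce {x | x = a ∨ x = b}).Reachable ⟨a, ha⟩ ⟨b, hb⟩ :=
    SimpleGraph.Adj.reachable (by simpa using hab)
  refine SimpleGraph.Connected.mk ?_
  intro u v
  have hu : u = ⟨a, ha⟩ ∨ u = ⟨b, hb⟩ := by
    rcases u.2 with h | h
    · exact Or.inl (Subtype.ext h)
    · exact Or.inr (Subtype.ext h)
  have hv : v = ⟨a, ha⟩ ∨ v = ⟨b, hb⟩ := by
    rcases v.2 with h | h
    · exact Or.inl (Subtype.ext h)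
    · exact Or.inr (Subtype.ext h)
  rcases hu with rfl | rfl <;> rcases hv with rfl | rfl
  · rfl
  · exact key
  · exact key.symm
  · rfl

open Finset in
lemma lemmaM {β : Type*} (W : SimpleGraph β) (π : β → Fin 7) (S : Finset (Sym2 β))
    [Fintype β] [DecidableEq β] [DecidableRel W.Adj]
    (h2 : ∀ i, (W.induce {x | π x = i}).Connected)
    (h3 : S ⊆ W.edgeFinset)
    (h4 : S.card = 15)
    (h5 : Set.InjOn (Sym2.map π) S)
    (h6 : ∀ e ∈ S, ¬ (Sym2.map π e).IsDiag) :
    HasK76Minor W := by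
  classical
  refine ⟨SimpleGraph.fromEdgeSet ((S.image (Sym2.map π)) : Finset (Sym2 (Fin 7))), ?_, ?_⟩
  · rw [edgeSet_fromEdgeSet]
    have : ((S.image (Sym2.map π) : Finset (Sym2 (Fin 7))) : Set (Sym2 (Fin 7))) \ Sym2.diagSet
        = (S.image (Sym2.map π) : Finset (Sym2 (Fin 7))) := by
      rw [_root_.sdiff_eq_self_iff_disjoint]
      rw [Set.disjoint_left]
      rintro e hdiag hmem
      simp only [Finset.coe_image, Set.mem_image] at hmem
      obtain ⟨e', he', rfl⟩ := hmem
      exact h6 e' he' hdiag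
    rw [this, Set.ncard_coe_finset, Finset.card_image_of_injOn h5, h4]
  · refine ⟨fun i => {x | π x = i}, fun i => Set.nonempty_coe_sort.mp (h2 i).nonempty, h2,
      fun i j hij => Set.disjoint_left.mpr (fun x (hx : π x = i) (hx' : π x = j) => hij (hx ▸ hx' ▸ rfl)), ?_⟩
    intro i j hadj
    rw [fromEdgeSet_adj] at hadj
    obtain ⟨hmem, hne⟩ := hadj
    simp only [Finset.coe_image, Set.mem_image, Finset.mem_coe] at hmem
    obtain ⟨e, he, hmap⟩ := hmem
    have hedge : e ∈ W.edgeSet := SimpleGraph.mem_edgeFinset.mp (h3 he)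
    induction e with
    | h x y =>
      rw [Sym2.map_pair_eq, Sym2.eq_iff] at hmap
      rcases hmap with ⟨rfl, rfl⟩ | ⟨rfl, rfl⟩
      · exact ⟨x, rfl, y, rfl, hedge⟩
      · exact ⟨y, rfl, x, rfl, hedge.symm⟩

open Finset in
lemma lemmaB {W : Type*} [Fintype W] [DecidableEq W] (G : SimpleGraph W) [DecidableRel G.Adj]
    (hcard : Fintype.card W = 8) (hδ : ∀ x, 4 ≤ G.degree x) (he : 18 ≤ G.edgeFinset.card) :
    ∃ a b, G.Adj a b ∧ (G.neighborFinset a ∩ G.neighborFinset b).card + 16 ≤ G.edgeFinset.card := by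
  by_contra hcon
  push_neg at hcon
  -- hcon : ∀ a b, G.Adj a b → G.edgeFinset.card < (N a ∩ N b).card + 16
  have hne : (univ : Finset W).Nonempty := by
    rw [← Finset.card_pos, Finset.card_univ, hcard]; norm_num
  obtain ⟨a, -, hmin⟩ := Finset.exists_min_image univ (fun x => G.degree x) hne
  set d := G.degree a with hd
  -- handshake
  have hhs : ∑ x : W, G.degree x = 2 * G.edgeFinset.card := by
    simpa using G.sum_degrees_eq_twice_card_edges
  have hsumlb : 8 * d ≤ ∑ x : W, G.degree x := by
    calc 8 * d = ∑ _x : W, d := by rw [Finset.sum_const, Finset.card_univ, hcard, smul_eq_mul]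
    _ ≤ ∑ x : W, G.degree x := Finset.sum_le_sum (fun x _ => hmin x (mem_univ x))
  -- a has a neighbor
  have hdeg4 : 4 ≤ d := hδ a
  have hnb : (G.neighborFinset a).Nonempty := by
    rw [← Finset.card_pos, card_neighborFinset_eq_degree]; omega
  obtain ⟨b, hb⟩ := hnb
  have hab : G.Adj a b := by rwa [mem_neighborFinset] at hb
  -- codeg bound: N a ∩ N b ⊆ (N a).erase b
  have hcodeg : ∀ c, G.Adj a c →
      (G.neighborFinset a ∩ G.neighborFinset c).card ≤ d - 1 := by
    intro c hc
    have hsub : G.neighborFinset a ∩ G.neighborFinset c ⊆ (G.neighborFinset a).erase c := by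
      intro x hx
      rw [Finset.mem_inter] at hx
      refine Finset.mem_erase.mpr ⟨?_, hx.1⟩
      intro h; subst h
      exact (G.irrefl ((G.mem_neighborFinset _ _).mp hx.2))
    calc (G.neighborFinset a ∩ G.neighborFinset c).card
        ≤ ((G.neighborFinset a).erase c).card := Finset.card_le_card hsub
      _ = d - 1 := by
          rw [Finset.card_erase_of_mem ((G.mem_neighborFinset _ _).mpr hc), card_neighborFinset_eq_degree]
  have hed : G.edgeFinset.card ≤ d + 14 := by
    have := hcon a b hab
    have := hcodeg b hab
    omega
  have hd4 : d = 4 := by omega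
  have he18 : G.edgeFinset.card = 18 := by omega
  -- every neighbor of a has codeg exactly N a \ {c}
  have hNa : ∀ c ∈ G.neighborFinset a,
      (G.neighborFinset a).erase c = G.neighborFinset a ∩ G.neighborFinset c := by
    intro c hc
    have hadj : G.Adj a c := (G.mem_neighborFinset _ _).mp hc
    have h1 := hcon a c hadj
    have hsub : G.neighborFinset a ∩ G.neighborFinset c ⊆ (G.neighborFinset a).erase c := by
      intro x hx
      rw [Finset.mem_inter] at hx
      refine Finset.mem_erase.mpr ⟨?_, hx.1⟩
      intro h; subst h
      exact (G.irrefl ((G.mem_neighborFinset _ _).mp hx.2))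
    have hcard1 : ((G.neighborFinset a).erase c).card = 3 := by
      rw [Finset.card_erase_of_mem hc, card_neighborFinset_eq_degree]; omega
    have hcard2 : 3 ≤ (G.neighborFinset a ∩ G.neighborFinset c).card := by omega
    exact (Finset.eq_of_subset_of_card_le hsub (by omega)).symm
  -- S is a clique of size 5
  set S : Finset W := insert a (G.neighborFinset a) with hS
  have haS : a ∉ G.neighborFinset a := by
    rw [mem_neighborFinset]; exact G.irrefl
  have hScard : S.card = 5 := by
    rw [hS, Finset.card_insert_of_notMem haS, card_neighborFinset_eq_degree]; omega
  have hclique : ∀ x ∈ S, ∀ y ∈ S, x ≠ y → G.Adj x y := by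
    intro x hx y hy hxy
    rw [hS, Finset.mem_insert] at hx hy
    rcases hx with rfl | hx
    · rcases hy with rfl | hy
      · exact absurd rfl hxy
      · exact (G.mem_neighborFinset _ _).mp hy
    · rcases hy with rfl | hy
      · exact ((G.mem_neighborFinset _ _).mp hx).symm
      · -- x, y both neighbors of a, x ≠ y
        have : y ∈ (G.neighborFinset a).erase x := Finset.mem_erase.mpr ⟨hxy.symm, hy⟩
        rw [hNa x hx, Finset.mem_inter, mem_neighborFinset, mem_neighborFinset] at this
        exact this.2
  set T : Finset W := univ \ S with hT
  have hTcard : T.card = 3 := by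
    rw [hT, Finset.card_sdiff_of_subset (Finset.subset_univ S), Finset.card_univ, hcard, hScard]
  -- degree partition for x : degree x = |N x ∩ S| + |N x ∩ T|
  have hpart : ∀ x, G.degree x = (G.neighborFinset x ∩ S).card + (G.neighborFinset x ∩ T).card := by
    intro x
    rw [← card_neighborFinset_eq_degree, ← Finset.card_union_of_disjoint, ← Finset.inter_union_distrib_left]
    · congr 1
      rw [hT, Finset.union_sdiff_of_subset (Finset.subset_univ S), Finset.inter_univ]
    · exact Finset.disjoint_left.mpr (fun x hx hx' =>
        ((Finset.mem_sdiff.mp (Finset.mem_inter.mp hx').2).2 (Finset.mem_inter.mp hx).2))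
  -- for x in S : |N x ∩ S| ≥ 4
  have hSdeg : ∀ x ∈ S, 4 ≤ (G.neighborFinset x ∩ S).card := by
    intro x hx
    have hsub : S.erase x ⊆ G.neighborFinset x ∩ S := by
      intro y hy
      rw [Finset.mem_erase] at hy
      exact Finset.mem_inter.mpr ⟨(G.mem_neighborFinset _ _).mpr (hclique x hx y hy.2 (Ne.symm hy.1)), hy.2⟩
    calc 4 = (S.erase x).card := by rw [Finset.card_erase_of_mem hx, hScard]
    _ ≤ _ := Finset.card_le_card hsub
  -- for x in T : |N x ∩ T| ≤ 2
  have hTdeg : ∀ x ∈ T, (G.neighborFinset x ∩ T).card ≤ 2 := by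
    intro x hx
    have hsub : G.neighborFinset x ∩ T ⊆ T.erase x := by
      intro y hy
      rw [Finset.mem_inter] at hy
      refine Finset.mem_erase.mpr ⟨?_, hy.2⟩
      intro h; subst h
      exact G.irrefl ((G.mem_neighborFinset _ _).mp hy.1)
    calc (G.neighborFinset x ∩ T).card ≤ (T.erase x).card := Finset.card_le_card hsub
    _ ≤ 2 := by rw [Finset.card_erase_of_mem hx, hTcard]
  -- double counting
  have hdc : ∑ x ∈ S, (G.neighborFinset x ∩ T).card = ∑ y ∈ T, (G.neighborFinset y ∩ S).card := by
    have h1 : ∀ (A B : Finset W), ∑ x ∈ A, (G.neighborFinset x ∩ B).card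
        = ∑ x ∈ A, ∑ y ∈ B, (if G.Adj x y then 1 else 0) := by
      intro A B
      refine Finset.sum_congr rfl (fun x _ => ?_)
      have hfe : G.neighborFinset x ∩ B = B.filter (fun y => G.Adj x y) := by
        ext y
        simp [mem_neighborFinset, and_comm]
      rw [hfe, Finset.card_filter]
    rw [h1, h1, Finset.sum_comm]
    refine Finset.sum_congr rfl (fun y _ => Finset.sum_congr rfl (fun x _ => ?_))
    simp [SimpleGraph.adj_comm]
  -- final contradiction
  have hSsum : 20 + ∑ x ∈ S, (G.neighborFinset x ∩ T).card ≤ ∑ x ∈ S, G.degree x := by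
    calc 20 + ∑ x ∈ S, (G.neighborFinset x ∩ T).card
        = ∑ x ∈ S, (4 + (G.neighborFinset x ∩ T).card) := by
          rw [Finset.sum_add_distrib, Finset.sum_const, hScard]; norm_num
    _ ≤ ∑ x ∈ S, G.degree x := by
          refine Finset.sum_le_sum (fun x hx => ?_)
          rw [hpart x]
          exact Nat.add_le_add_right (hSdeg x hx) _
  have hTsum1 : 12 ≤ ∑ y ∈ T, G.degree y := by
    calc (12 : ℕ) = ∑ _y ∈ T, 4 := by rw [Finset.sum_const, hTcard]; norm_num
    _ ≤ _ := Finset.sum_le_sum (fun y _ => hδ y)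
  have hTsum2 : 6 ≤ ∑ y ∈ T, (G.neighborFinset y ∩ S).card := by
    have : ∀ y ∈ T, 2 ≤ (G.neighborFinset y ∩ S).card := by
      intro y hy
      have := hpart y
      have := hTdeg y hy
      have := hδ y
      omega
    calc (6 : ℕ) = ∑ _y ∈ T, 2 := by rw [Finset.sum_const, hTcard]; norm_num
    _ ≤ _ := Finset.sum_le_sum this
  have htot : ∑ x : W, G.degree x = ∑ x ∈ S, G.degree x + ∑ y ∈ T, G.degree y := by
    rw [hT, ← Finset.sum_sdiff (Finset.subset_univ S)]
    ring
  omega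

open Finset in
/-- The 7-vertex case: enough edges on 7 vertices gives the minor directly. -/
lemma subMinor {W : Type*} [Fintype W] [DecidableEq W] (G : SimpleGraph W) [DecidableRel G.Adj]
    (hcard : Fintype.card W = 7) (he : 15 ≤ G.edgeFinset.card) : HasK76Minor G := by
  classical
  have e7 : W ≃ Fin 7 := Fintype.equivFinOfCardEq hcard
  obtain ⟨S, hSsub, hScard⟩ := Finset.exists_subset_card_eq he
  refine lemmaM G e7 S ?_ hSsub hScard ?_ ?_
  · intro i
    have : {x | e7 x = i} = {x | x = e7.symm i} := by
      ext x
      simp [Equiv.eq_symm_apply, eq_comm]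
    rw [this]
    exact connected_singleton G _
  · exact (Sym2.map.injective e7.injective).injOn
  · intro e heS
    rw [Sym2.isDiag_map e7.injective]
    exact G.not_isDiag_of_mem_edgeSet (mem_edgeFinset.mp (hSsub heS))

/-- The 8-vertex case: contract an edge `ab` with small codegree. -/
lemma pairMinor {W : Type*} [Fintype W] [DecidableEq W] (G : SimpleGraph W) [DecidableRel G.Adj]
    (hcard : Fintype.card W = 8) {a b : W} (hab : G.Adj a b)
    (hle : (G.neighborFinset a ∩ G.neighborFinset b).card + 16 ≤ G.edgeFinset.card) :
    HasK76Minor G := by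
  classical
  have h6card : Fintype.card {x : W // ¬(x = a ∨ x = b)} = 6 := by
    rw [Fintype.card_subtype_compl]
    have : Fintype.card {x : W // x = a ∨ x = b} = 2 := by
      rw [Fintype.card_subtype]
      rw [show (Finset.univ.filter fun x => x = a ∨ x = b) = {a, b} by ext x; simp]
      rw [Finset.card_insert_of_notMem (by simp [G.ne_of_adj hab]), Finset.card_singleton]
    omega
  have e6 : {x : W // ¬(x = a ∨ x = b)} ≃ Fin 6 := Fintype.equivFinOfCardEq h6card
  set π : W → Fin 7 := fun x => if h : x = a ∨ x = b then 0 else (e6 ⟨x, h⟩).succ with hπ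
  have hπab : ∀ x, (x = a ∨ x = b) → π x = 0 := fun x h => dif_pos h
  have hπo : ∀ x (h : ¬(x = a ∨ x = b)), π x = (e6 ⟨x, h⟩).succ := fun x h => dif_neg h
  have hπinj : ∀ x y, π x = π y → x = y ∨ ((x = a ∨ x = b) ∧ (y = a ∨ y = b)) := by
    intro x y hxy
    by_cases hx : x = a ∨ x = b <;> by_cases hy : y = a ∨ y = b
    · exact Or.inr ⟨hx, hy⟩
    · rw [hπab x hx, hπo y hy] at hxy
      exact absurd hxy.symm (Fin.succ_ne_zero _)
    · rw [hπab y hy, hπo x hx] at hxy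
      exact absurd hxy (Fin.succ_ne_zero _)
    · rw [hπo x hx, hπo y hy] at hxy
      have := e6.injective (Fin.succ_injective _ hxy)
      exact Or.inl (congrArg Subtype.val this)
  -- the removed edges
  set removed : Finset (Sym2 W) :=
    insert s(a, b) ((G.neighborFinset a ∩ G.neighborFinset b).image (fun t => s(b, t))) with hrem
  have hremcard : removed.card ≤ (G.neighborFinset a ∩ G.neighborFinset b).card + 1 := by
    calc removed.card ≤ ((G.neighborFinset a ∩ G.neighborFinset b).image (fun t => s(b, t))).card + 1 :=
          Finset.card_insert_le _ _
    _ ≤ _ := by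
          have := Finset.card_image_le (s := G.neighborFinset a ∩ G.neighborFinset b)
            (f := fun t => s(b, t))
          omega
  have hS0 : 15 ≤ (G.edgeFinset \ removed).card := by
    have h1 : G.edgeFinset.card ≤ (G.edgeFinset \ removed).card + removed.card :=
      Finset.card_le_card_sdiff_add_card
    omega
  obtain ⟨S, hSsub, hScard⟩ := Finset.exists_subset_card_eq hS0
  have hSedge : S ⊆ G.edgeFinset := fun e heS => (Finset.mem_sdiff.mp (hSsub heS)).1
  have hSrem : ∀ e ∈ S, e ∉ removed := fun e heS => (Finset.mem_sdiff.mp (hSsub heS)).2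
  -- membership facts about removed
  have habrem : s(a, b) ∈ removed := Finset.mem_insert_self _ _
  have hcommonrem : ∀ x, G.Adj a x → G.Adj b x → s(b, x) ∈ removed := by
    intro x h1 h2
    refine Finset.mem_insert_of_mem (Finset.mem_image_of_mem _ ?_)
    rw [Finset.mem_inter, mem_neighborFinset, mem_neighborFinset]
    exact ⟨h1, h2⟩
  -- the key injectivity on pairs
  have key : ∀ x y x' y', G.Adj x y → G.Adj x' y' →
      s(x, y) ∉ removed → s(x', y') ∉ removed → π x = π x' → π y = π y' → s(x, y) = s(x', y') := by
    intro x y x' y' hadj hadj' hrm hrm' hx hy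
    rcases hπinj x x' hx with rfl | ⟨hxab, hxab'⟩
    · rcases hπinj y y' hy with rfl | ⟨hyab, hyab'⟩
      · rfl
      · by_cases hyy : y = y'
        · rw [hyy]
        · -- y ≠ y', both in {a,b}; x adjacent to both a and b; contradictions
          exfalso
          have hxa : x ≠ a := by
            rintro rfl
            rcases hyab with rfl | rfl
            · exact G.irrefl hadj
            · exact hrm habrem
          have hxb : x ≠ b := by
            rintro rfl
            rcases hyab' with rfl | rfl
            · rcases hyab with rfl | rfl
              · exact hrm (by rwa [Sym2.eq_swap])
              · exact G.irrefl hadj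
            · exact G.irrefl hadj'
          have hax : G.Adj a x := by
            rcases hyab with rfl | rfl
            · exact hadj.symm
            · rcases hyab' with rfl | rfl
              · exact hadj'.symm
              · exact absurd rfl hyy
          have hbx : G.Adj b x := by
            rcases hyab with rfl | rfl
            · rcases hyab' with rfl | rfl
              · exact absurd rfl hyy
              · exact hadj'.symm
            · exact hadj.symm
          have := hcommonrem x hax hbx
          rcases hyab with rfl | rfl
          · rcases hyab' with rfl | rfl
            · exact absurd rfl hyy
            · exact hrm' (by rwa [Sym2.eq_swap])
          · exact hrm (by rwa [Sym2.eq_swap])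
    · rcases hπinj y y' hy with rfl | ⟨hyab, hyab'⟩
      · by_cases hxx : x = x'
        · rw [hxx]
        · exfalso
          have hya : y ≠ a := by
            rintro rfl
            rcases hxab with rfl | rfl
            · exact G.irrefl hadj
            · exact hrm (by rwa [Sym2.eq_swap])
          have hyb : y ≠ b := by
            rintro rfl
            rcases hxab' with rfl | rfl
            · rcases hxab with rfl | rfl
              · exact hrm habrem
              · exact G.irrefl hadj
            · exact G.irrefl hadj'
          have hay : G.Adj a y := by
            rcases hxab with rfl | rfl
            · exact hadj
            · rcases hxab' with rfl | rfl
              · exact hadj'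
              · exact absurd rfl hxx
          have hby : G.Adj b y := by
            rcases hxab with rfl | rfl
            · rcases hxab' with rfl | rfl
              · exact absurd rfl hxx
              · exact hadj'
            · exact hadj
          have := hcommonrem y hay hby
          rcases hxab with rfl | rfl
          · rcases hxab' with rfl | rfl
            · exact absurd rfl hxx
            · exact hrm' this
          · exact hrm this
      · -- all four endpoints in {a,b} : e1 = s(a,b) removed
        exfalso
        apply hrm
        have hneq : x ≠ y := G.ne_of_adj hadj
        rcases hxab with rfl | rfl <;> rcases hyab with rfl | rfl
        · exact absurd rfl hneq
        · exact habrem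
        · rwa [Sym2.eq_swap]
        · exact absurd rfl hneq
  refine lemmaM G π S ?_ hSedge hScard ?_ ?_
  · intro i
    refine Fin.cases ?_ ?_ i
    · have : {x | π x = 0} = {x | x = a ∨ x = b} := by
        ext x
        simp only [Set.mem_setOf_eq]
        constructor
        · intro hx
          by_contra hc
          rw [hπo x hc] at hx
          exact Fin.succ_ne_zero _ hx
        · exact hπab x
      rw [this]
      exact connected_pair G hab
    · intro j
      have : {x | π x = Fin.succ j} = {x | x = (e6.symm j).1} := by
        ext x
        simp only [Set.mem_setOf_eq]
        constructor
        · intro hx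
          by_cases hc : x = a ∨ x = b
          · rw [hπab x hc] at hx
            exact absurd hx.symm (Fin.succ_ne_zero _)
          · rw [hπo x hc] at hx
            have := Fin.succ_injective _ hx
            have : (⟨x, hc⟩ : {x : W // ¬(x = a ∨ x = b)}) = e6.symm j := by
              rw [← this, Equiv.symm_apply_apply]
            exact congrArg Subtype.val this
        · rintro rfl
          rw [hπo _ (e6.symm j).2, Subtype.coe_eta, Equiv.apply_symm_apply]
      rw [this]
      exact connected_singleton G _
  · -- InjOn
    intro e1 he1 e2 he2 hmap
    induction e1 with
    | h x y =>
      induction e2 with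
      | h x' y' =>
        have hadj1 : G.Adj x y := mem_edgeFinset.mp (hSedge he1)
        have hadj2 : G.Adj x' y' := mem_edgeFinset.mp (hSedge he2)
        have hrm1 := hSrem _ he1
        have hrm2 := hSrem _ he2
        rw [Sym2.map_pair_eq, Sym2.map_pair_eq, Sym2.eq_iff] at hmap
        rcases hmap with ⟨h1, h2⟩ | ⟨h1, h2⟩
        · exact key x y x' y' hadj1 hadj2 hrm1 hrm2 h1 h2
        · have := key x y y' x' hadj1 hadj2.symm hrm1 (by rwa [Sym2.eq_swap]) h1 h2
          rwa [Sym2.eq_swap (a := y') (b := x')] at this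
  · -- not diag
    intro e heS
    induction e with
    | h x y =>
      rw [Sym2.map_pair_eq, Sym2.isDiag_iff_proj_eq]
      intro hc
      have hadj : G.Adj x y := mem_edgeFinset.mp (hSedge heS)
      rcases hπinj x y hc with rfl | ⟨hxab, hyab⟩
      · exact G.irrefl hadj
      · apply hSrem _ heS
        have hneq : x ≠ y := G.ne_of_adj hadj
        rcases hxab with rfl | rfl <;> rcases hyab with rfl | rfl
        · exact absurd rfl hneq
        · exact habrem
        · rwa [Sym2.eq_swap]
        · exact absurd rfl hneq

open Finset in
/-- Every graph on 8 or 9 vertices with minimum degree at least 5 has a vertex `v`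
whose deletion leaves a graph with a `𝒦₇⁻⁶` minor. -/
theorem vertex_deletion_gives_K7_minus6_minor
    {V : Type*} [Fintype V] (H : SimpleGraph V) [DecidableRel H.Adj]
    (hcard : Fintype.card V = 8 ∨ Fintype.card V = 9)
    (hdeg : ∀ v : V, 5 ≤ H.degree v) :
    ∃ v : V, HasK76Minor (H.induce {u | u ≠ v}) := by
  classical
  have hne : (univ : Finset V).Nonempty := by
    rw [← Finset.card_pos, Finset.card_univ]; omega
  obtain ⟨v, -, hmin⟩ := Finset.exists_min_image univ (fun x => H.degree x) hne
  refine ⟨v, ?_⟩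
  set s : Set V := {u | u ≠ v} with hs
  set G' := H.induce s with hG'
  haveI hdecr : DecidableRel G'.Adj := fun x y => ‹DecidableRel H.Adj› x.1 y.1
  have hscard : Fintype.card ↥s = Fintype.card V - 1 := Set.card_ne_eq v
  -- degree transfer
  have degv : ∀ w : ↥s, G'.degree w = ((H.neighborFinset w.1).erase v).card := by
    intro w
    rw [← card_neighborFinset_eq_degree]
    refine Finset.card_bij' (fun x _ => (x : V)) (fun x hx => ⟨x, (Finset.mem_erase.mp hx).1⟩)
      ?_ ?_ ?_ ?_
    · intro x hx
      rw [mem_neighborFinset] at hx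
      exact Finset.mem_erase.mpr ⟨x.2, (H.mem_neighborFinset _ _).mpr hx⟩
    · intro x hx
      rw [mem_neighborFinset]
      exact (Finset.mem_erase.mp hx).2 |> (H.mem_neighborFinset _ _).mp
    · intro x _; rfl
    · intro x _; rfl
  have herase : ∀ u : V, ((H.neighborFinset u).erase v).card + (if H.Adj u v then 1 else 0)
      = H.degree u := by
    intro u
    by_cases h : H.Adj u v
    · rw [if_pos h, Finset.card_erase_of_mem ((H.mem_neighborFinset _ _).mpr h),
        card_neighborFinset_eq_degree]
      have : 1 ≤ H.degree u := by have := hdeg u; omega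
      omega
    · rw [if_neg h, Finset.erase_eq_of_notMem
        (fun hc => h ((H.mem_neighborFinset _ _).mp hc)), card_neighborFinset_eq_degree]
      omega
  -- sum over the subtype
  have hsum1 : ∑ w : ↥s, G'.degree w = ∑ u ∈ univ.erase v, ((H.neighborFinset u).erase v).card := by
    rw [Finset.sum_congr rfl (fun w (_ : w ∈ univ) => degv w)]
    exact (Finset.sum_subtype (univ.erase v)
      (fun x => by simp only [Finset.mem_erase, Finset.mem_univ, and_true]; exact Iff.rfl)
      (fun u => ((H.neighborFinset u).erase v).card)).symm
  have hsum2 : ∑ u ∈ univ.erase v, (if H.Adj u v then 1 else 0) = H.degree v := by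
    rw [← Finset.card_filter]
    rw [show (univ.erase v).filter (fun u => H.Adj u v) = H.neighborFinset v by
      ext u
      simp only [Finset.mem_filter, Finset.mem_erase, Finset.mem_univ, true_and, and_true,
        mem_neighborFinset]
      constructor
      · exact fun h => h.2.symm
      · exact fun h => ⟨H.ne_of_adj h.symm, h.symm⟩]
    exact card_neighborFinset_eq_degree H v
  have hsum3 : ∑ u ∈ univ.erase v, H.degree u
      = ∑ w : ↥s, G'.degree w + H.degree v := by
    rw [hsum1, ← hsum2, ← Finset.sum_add_distrib]
    exact (Finset.sum_congr rfl (fun u _ => (herase u).symm))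
  have hsumlb : (Fintype.card V - 1) * H.degree v ≤ ∑ u ∈ univ.erase v, H.degree u := by
    calc (Fintype.card V - 1) * H.degree v = ∑ _u ∈ univ.erase v, H.degree v := by
          rw [Finset.sum_const, Finset.card_erase_of_mem (mem_univ v), Finset.card_univ,
            smul_eq_mul]
    _ ≤ _ := Finset.sum_le_sum (fun u _ => hmin u (mem_univ u))
  have hhs : ∑ w : ↥s, G'.degree w = 2 * G'.edgeFinset.card := by
    simpa using G'.sum_degrees_eq_twice_card_edges
  have hdv : 5 ≤ H.degree v := hdeg v
  -- min degree of G'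
  have hδ' : ∀ w : ↥s, 4 ≤ G'.degree w := by
    intro w
    rw [degv w]
    have h2 := herase w.1
    have h3 := hdeg w.1
    by_cases h : H.Adj w.1 v
    · rw [if_pos h] at h2; omega
    · rw [if_neg h] at h2; omega
  rcases hcard with h8 | h9
  · -- |V| = 8 : seven vertices remain
    have hcard7 : Fintype.card ↥s = 7 := by omega
    have he' : 15 ≤ G'.edgeFinset.card := by
      have : (8 - 1) * H.degree v ≤ 2 * G'.edgeFinset.card + H.degree v := by
        rw [← hhs, ← hsum3, ← h8]; exact hsumlb
      omega
    exact subMinor G' hcard7 he'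
  · -- |V| = 9 : eight vertices remain
    have hcard8 : Fintype.card ↥s = 8 := by omega
    have he' : 18 ≤ G'.edgeFinset.card := by
      have : (9 - 1) * H.degree v ≤ 2 * G'.edgeFinset.card + H.degree v := by
        rw [← hhs, ← hsum3, ← h9]; exact hsumlb
      omega
    obtain ⟨a, b, hab, hle⟩ := lemmaB G' hcard8 hδ' he'
    exact pairMinor G' hcard8 hab hle
end

section
/- Let $k \ge 4$ be an integer and let $G$ be a $k$-contraction-critical graph. Then for every vertex $v$ of $G$, the independence number of the subgraph of $G$ induced on the neighborhood $N(v)$ satisfies $\alpha(G[N(v)]) \le d(v) - k + 2$, where $d(v)$ is the degree of $v$. -/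
open SimpleGraph

/-- `G` is `k`-contraction-critical: `χ(G) = k` and every proper minor of `G`
(a minor not isomorphic to `G`) is `(k-1)`-colorable. -/
def IsContractionCritical (k : ℕ) {V : Type} (G : SimpleGraph V) : Prop :=
  G.chromaticNumber = k ∧
    ∀ (W : Type) [Fintype W] (H : SimpleGraph W),
      IsMinorOf H G → ¬ Nonempty (G ≃g H) → H.Colorable (k - 1)

/-- A finset of `Fin n` of card `< n` misses some color. -/
lemma exists_free_color {n : ℕ} (t : Finset (Fin n)) (h : t.card < n) :
    ∃ col : Fin n, col ∉ t := by
  by_contra h'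
  push_neg at h'
  have hsub : (Finset.univ : Finset (Fin n)) ⊆ t := fun x _ => h' x
  have := Finset.card_le_card hsub
  simp only [Finset.card_univ, Fintype.card_fin] at this
  omega

/-- Dirac: in a `k`-contraction-critical graph (`k ≥ 4`), for every vertex `v`,
every independent set in the neighborhood of `v` has size at most `d(v) - k + 2`. -/
theorem indep_in_neighborhood_of_contraction_critical
    (k : ℕ) (hk : 4 ≤ k) {V : Type} [Fintype V] (G : SimpleGraph V)
    [DecidableRel G.Adj]
    (hG : IsContractionCritical k G) (v : V)
    (s : Finset V) (hs : (s : Set V) ⊆ G.neighborSet v)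
    (hindep : ∀ a ∈ s, ∀ b ∈ s, a ≠ b → ¬ G.Adj a b) :
    s.card + k ≤ G.degree v + 2 := by
  classical
  by_contra hcon
  push_neg at hcon
  -- hcon : G.degree v + 2 < s.card + k
  have hvs : v ∉ s := fun h => G.irrefl (hs h)
  have hscard : s.card ≤ G.degree v := by
    rw [← G.card_neighborFinset_eq_degree]
    refine Finset.card_le_card fun u hu => ?_
    rw [SimpleGraph.mem_neighborFinset]
    exact hs hu
  have hVpos : 0 < Fintype.card V := Fintype.card_pos_iff.mpr ⟨v⟩
  -- From a `(k-1)`-coloring of G we derive a contradiction with χ(G) = k.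
  have hcontra : ¬ G.Colorable (k - 1) := by
    intro hcol
    have h1 := hcol.chromaticNumber_le
    rw [hG.1] at h1
    have h2 : (k : ℕ∞) ≤ (k - 1 : ℕ) := h1
    have h3 : k ≤ k - 1 := Nat.cast_le.mp h2
    omega
  rcases s.eq_empty_or_nonempty with hse | hsne
  · -- s = ∅ : then deg v ≤ k - 3; delete v
    subst hse
    simp only [Finset.card_empty, zero_add] at hcon
    -- hcon : G.degree v + 2 < k
    set T : Set V := {u | u ≠ v} with hT
    let H : SimpleGraph T := G.induce T
    have hminor : IsMinorOf H G := by
      refine ⟨fun b => {b.val}, fun b => ⟨b.val, rfl⟩, ?_, ?_, ?_⟩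
      · intro b
        haveI : Nonempty ↥({b.val} : Set V) := ⟨⟨b.val, rfl⟩⟩
        refine Connected.mk fun x y => ?_
        have hxy : x = y := Subtype.ext (x.prop.trans y.prop.symm)
        exact hxy ▸ Reachable.refl x
      · intro b₁ b₂ hne
        rw [Set.disjoint_singleton_left]
        exact fun h => hne (Subtype.ext h)
      · intro b₁ b₂ hab
        exact ⟨b₁, rfl, b₂, rfl, hab⟩
    have hniso : ¬ Nonempty (G ≃g H) := by
      rintro ⟨e⟩
      have hcard := Fintype.card_congr e.toEquiv
      have hW : Fintype.card T = Fintype.card V - 1 := by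
        have h1 : Fintype.card {u : V // ¬ u = v} = Fintype.card V - Fintype.card {u : V // u = v} :=
          Fintype.card_subtype_compl _
        have h2 : Fintype.card {u : V // u = v} = 1 := Fintype.card_subtype_eq v
        have h3 : Fintype.card T = Fintype.card {u : V // ¬ u = v} := Fintype.card_congr (Equiv.refl _)
        omega
      omega
    obtain ⟨c⟩ := hG.2 T H hminor hniso
    -- extend c to a coloring of G
    have hk1 : 0 < k - 1 := by omega
    let junk : Fin (k - 1) := ⟨0, hk1⟩
    let g₀ : V → Fin (k - 1) := fun u => if h : u = v then junk else c ⟨u, h⟩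
    set used : Finset (Fin (k - 1)) := (G.neighborFinset v).image g₀ with hused
    have hcardused : used.card < k - 1 := by
      have h1 : used.card ≤ (G.neighborFinset v).card := Finset.card_image_le
      rw [G.card_neighborFinset_eq_degree] at h1
      omega
    obtain ⟨col, hcol⟩ := exists_free_color used hcardused
    have hnb : ∀ u, G.Adj v u → g₀ u ∈ used := fun u hu =>
      Finset.mem_image_of_mem g₀ ((SimpleGraph.mem_neighborFinset G v u).mpr hu)
    refine hcontra ⟨Coloring.mk (fun u => if u = v then col else g₀ u) ?_⟩
    intro a b hab hgab
    by_cases hav : a = v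
    · subst hav
      have hbv : b ≠ a := (G.ne_of_adj hab).symm
      rw [if_pos rfl, if_neg hbv] at hgab
      exact hcol (hgab ▸ hnb b hab)
    · by_cases hbv : b = v
      · subst hbv
        rw [if_pos rfl, if_neg hav] at hgab
        exact hcol (hgab ▸ hnb a hab.symm)
      · rw [if_neg hav, if_neg hbv] at hgab
        simp only [g₀, dif_neg hav, dif_neg hbv] at hgab
        exact c.valid (show H.Adj ⟨a, hav⟩ ⟨b, hbv⟩ from hab) hgab
  · -- s nonempty : contract {v} ∪ s
    set W := {u : V // u ∉ s} with hW
    let B : W → Set V := fun x => if x.val = v then insert v (↑s : Set V) else {x.val}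
    let H : SimpleGraph W :=
      { Adj := fun x y => x ≠ y ∧ ∃ p ∈ B x, ∃ q ∈ B y, G.Adj p q
        symm := ⟨by
          rintro x y ⟨hne, p, hp, q, hq, h⟩
          exact ⟨hne.symm, q, hq, p, hp, h.symm⟩⟩
        loopless := ⟨fun x h => h.1 rfl⟩ }
    have hBv : ∀ x : W, x.val = v → B x = insert v (↑s : Set V) := by
      intro x hx; simp only [B, if_pos hx]
    have hBnv : ∀ x : W, x.val ≠ v → B x = {x.val} := by
      intro x hx; simp only [B, if_neg hx]
    have hminor : IsMinorOf H G := by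
      refine ⟨B, ?_, ?_, ?_, ?_⟩
      · intro b
        by_cases hb : b.val = v
        · rw [hBv b hb]; exact ⟨v, Set.mem_insert _ _⟩
        · rw [hBnv b hb]; exact ⟨b.val, rfl⟩
      · intro b
        by_cases hb : b.val = v
        · rw [hBv b hb]
          have hv0 : v ∈ (insert v (↑s : Set V)) := Set.mem_insert _ _
          have key : ∀ y : ↥(insert v (↑s : Set V)),
              (G.induce (insert v (↑s : Set V))).Reachable y ⟨v, hv0⟩ := by
            intro y
            rcases Set.mem_insert_iff.mp y.prop with h | h
            · have : y = ⟨v, hv0⟩ := Subtype.ext h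
              exact this ▸ Reachable.refl y
            · exact SimpleGraph.Adj.reachable (show G.Adj y.val v from (hs h).symm)
          haveI : Nonempty ↥(insert v (↑s : Set V)) := ⟨⟨v, hv0⟩⟩
          exact Connected.mk fun a b => (key a).trans (key b).symm
        · rw [hBnv b hb]
          haveI : Nonempty ↥({b.val} : Set V) := ⟨⟨b.val, rfl⟩⟩
          refine Connected.mk fun x y => ?_
          have hxy : x = y := Subtype.ext (x.prop.trans y.prop.symm)
          exact hxy ▸ Reachable.refl x
      · intro x y hxy
        by_cases hx : x.val = v <;> by_cases hy : y.val = v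
        · exact absurd (Subtype.ext (hx.trans hy.symm)) hxy
        · rw [hBv x hx, hBnv y hy, Set.disjoint_singleton_right]
          rintro (h | h)
          · exact hy h
          · exact y.prop h
        · rw [hBnv x hx, hBv y hy, Set.disjoint_singleton_left]
          rintro (h | h)
          · exact hx h
          · exact x.prop h
        · rw [hBnv x hx, hBnv y hy, Set.disjoint_singleton_left]
          rw [Set.mem_singleton_iff]
          exact fun h => hxy (Subtype.ext h)
      · intro b₁ b₂ hab
        exact hab.2
    have hniso : ¬ Nonempty (G ≃g H) := by
      rintro ⟨e⟩
      have hcard := Fintype.card_congr e.toEquiv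
      have h1 : Fintype.card {u : V // ¬ u ∈ s} = Fintype.card V - Fintype.card {u : V // u ∈ s} :=
        Fintype.card_subtype_compl _
      have h2 : Fintype.card {u : V // u ∈ s} = s.card := Fintype.card_coe s
      have h3 : Fintype.card W = Fintype.card {u : V // ¬ u ∈ s} := Fintype.card_congr (Equiv.refl _)
      have h4 : 0 < s.card := Finset.card_pos.mpr hsne
      omega
    obtain ⟨c⟩ := hG.2 W H hminor hniso
    have hk1 : 0 < k - 1 := by omega
    let w : W := ⟨v, hvs⟩
    let g₀ : V → Fin (k - 1) := fun u =>
      if h : u ∈ s then c w else if h' : u = v then c w else c ⟨u, h⟩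
    set used : Finset (Fin (k - 1)) :=
      insert (c w) (((G.neighborFinset v) \ s).image g₀) with hused
    have hcardused : used.card < k - 1 := by
      have h1 : used.card ≤ (((G.neighborFinset v) \ s).image g₀).card + 1 :=
        Finset.card_insert_le _ _
      have h2 : (((G.neighborFinset v) \ s).image g₀).card ≤ ((G.neighborFinset v) \ s).card :=
        Finset.card_image_le
      have hsub : s ⊆ G.neighborFinset v := by
        intro u hu
        rw [SimpleGraph.mem_neighborFinset]
        exact hs hu
      have h3 : ((G.neighborFinset v) \ s).card = (G.neighborFinset v).card - s.card :=
        Finset.card_sdiff_of_subset hsub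
      rw [G.card_neighborFinset_eq_degree] at h3
      omega
    obtain ⟨col, hcol⟩ := exists_free_color used hcardused
    have hnb : ∀ u, G.Adj v u → g₀ u ∈ used := by
      intro u hu
      by_cases hus : u ∈ s
      · simp only [g₀, dif_pos hus, used]
        exact Finset.mem_insert_self _ _
      · have hmem : u ∈ (G.neighborFinset v) \ s :=
          Finset.mem_sdiff.mpr ⟨(SimpleGraph.mem_neighborFinset G v u).mpr hu, hus⟩
        exact Finset.mem_insert_of_mem (Finset.mem_image_of_mem g₀ hmem)
    -- the adjacency lemma for the contracted graph
    have hHadj : ∀ (a b : V) (ha : a ∉ s) (hb : b ∉ s), a ≠ v → b ≠ v → G.Adj a b →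
        c ⟨a, ha⟩ ≠ c ⟨b, hb⟩ := by
      intro a b ha hb hav hbv hab
      refine c.valid ⟨fun h => G.ne_of_adj hab (congrArg Subtype.val h), a, ?_, b, ?_, hab⟩
      · rw [hBnv ⟨a, ha⟩ hav]; rfl
      · rw [hBnv ⟨b, hb⟩ hbv]; rfl
    have hHadjw : ∀ (a b : V) (hb : b ∉ s), a ∈ s → b ≠ v → G.Adj a b →
        c w ≠ c ⟨b, hb⟩ := by
      intro a b hb has hbv hab
      refine c.valid ⟨fun h => hbv (congrArg Subtype.val h).symm, a, ?_, b, ?_, hab⟩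
      · rw [hBv w rfl]; exact Set.mem_insert_of_mem _ has
      · rw [hBnv ⟨b, hb⟩ hbv]; rfl
    refine hcontra ⟨Coloring.mk (fun u => if u = v then col else g₀ u) ?_⟩
    intro a b hab hgab
    have hne : a ≠ b := G.ne_of_adj hab
    by_cases hav : a = v
    · subst hav
      have hbv : b ≠ a := hne.symm
      rw [if_pos rfl, if_neg hbv] at hgab
      exact hcol (hgab ▸ hnb b hab)
    · by_cases hbv : b = v
      · subst hbv
        rw [if_pos rfl, if_neg hav] at hgab
        exact hcol (hgab ▸ hnb a hab.symm)
      · rw [if_neg hav, if_neg hbv] at hgab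
        by_cases has : a ∈ s <;> by_cases hbs : b ∈ s
        · exact hindep a has b hbs hne hab
        · simp only [g₀, dif_pos has, dif_neg hbs, dif_neg hbv] at hgab
          exact hHadjw a b hbs has hbv hab hgab
        · simp only [g₀, dif_neg has, dif_pos hbs, dif_neg hav] at hgab
          exact hHadjw b a has hbs hav hab.symm hgab.symm
        · simp only [g₀, dif_neg has, dif_neg hbs, dif_neg hav, dif_neg hbv] at hgab
          exact hHadj a b has hbs hav hbv hab hgab
end

section
/- Let $H$ be a simple graph on 9 vertices with independence number exactly 2, no $K_5$ subgraph, and suppose $H$ is edge-minimal with these properties (i.e., for every edge $e$ of $H$, the graph $H - e$ either contains $K_5$ or has independence number greater than 2). Then $H$ has no dominating edge, i.e., for every edge $xy$ of $H$ there exists a vertex $z \notin \{x,y\}$ adjacent to neither $x$ nor $y$. -/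
open SimpleGraph

/-- An edge-minimal graph on 9 vertices with independence number exactly 2 and no
`K₅` subgraph has no dominating edge. -/
theorem no_dominating_edge
    {V : Type*} [Fintype V] (H : SimpleGraph V)
    (hcard : Fintype.card V = 9)
    (hpair : ∃ a b : V, a ≠ b ∧ ¬ H.Adj a b)
    (hindep : ∀ s : Finset V, (∀ a ∈ s, ∀ b ∈ s, a ≠ b → ¬ H.Adj a b) → s.card ≤ 2)
    (hK5 : H.CliqueFree 5)
    (hmin : ∀ e ∈ H.edgeSet,
      ¬ (H.deleteEdges {e}).CliqueFree 5 ∨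
        ∃ s : Finset V, s.card = 3 ∧
          ∀ a ∈ s, ∀ b ∈ s, a ≠ b → ¬ (H.deleteEdges {e}).Adj a b) :
    ∀ x y : V, H.Adj x y →
      ∃ z : V, z ≠ x ∧ z ≠ y ∧ ¬ H.Adj z x ∧ ¬ H.Adj z y := by
  classical
  intro x y hxy
  have he : s(x, y) ∈ H.edgeSet := hxy
  rcases hmin _ he with hK | ⟨s, hs3, hsind⟩
  · exact absurd (hK5.anti (H.deleteEdges_le _)) hK
  · -- s has 3 elements, pairwise nonadjacent in H - xy; some pair adjacent in H
    have hnot : ¬ (∀ a ∈ s, ∀ b ∈ s, a ≠ b → ¬ H.Adj a b) := by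
      intro h
      have := hindep s h
      omega
    push_neg at hnot
    obtain ⟨a, ha, b, hb, hab, hadj⟩ := hnot
    have hdel := hsind a ha b hb hab
    rw [SimpleGraph.deleteEdges_adj] at hdel
    push_neg at hdel
    have heq : s(a, b) = s(x, y) := by
      have := hdel hadj
      simpa using this
    rw [Sym2.eq_iff] at heq
    -- find third vertex c of s
    have hcard2 : ({a, b} : Finset V).card ≤ 2 := by
      apply le_trans (Finset.card_insert_le _ _); simp
    have hsd : 1 ≤ (s \ ({a, b} : Finset V)).card := by
      have := Finset.le_card_sdiff ({a, b} : Finset V) s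
      omega
    obtain ⟨c, hc⟩ := Finset.card_pos.mp (show 0 < (s \ ({a, b} : Finset V)).card by omega)
    rw [Finset.mem_sdiff] at hc
    obtain ⟨hcs, hcab⟩ := hc
    simp only [Finset.mem_insert, Finset.mem_singleton] at hcab
    push_neg at hcab
    obtain ⟨hca, hcb⟩ := hcab
    have hcx : c ≠ x ∧ c ≠ y := by
      rcases heq with ⟨hax, hby⟩ | ⟨hay, hbx⟩
      · exact ⟨hax ▸ hca, hby ▸ hcb⟩
      · exact ⟨hbx ▸ hcb, hay ▸ hca⟩
    have key : ∀ w ∈ s, w ≠ c → ¬ H.Adj c w := by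
      intro w hw hwc hadjcw
      have := hsind c hcs w hw (fun h => hwc h.symm)
      rw [SimpleGraph.deleteEdges_adj] at this
      push_neg at this
      have hmem := this hadjcw
      simp only [Set.mem_singleton_iff] at hmem
      rw [Sym2.eq_iff] at hmem
      rcases hmem with ⟨h1, _⟩ | ⟨h2, _⟩
      · exact hcx.1 h1
      · exact hcx.2 h2
    rcases heq with ⟨hax, hby⟩ | ⟨hay, hbx⟩
    · subst hax; subst hby
      exact ⟨c, hcx.1, hcx.2, key a ha hcx.1.symm, key b hb hcx.2.symm⟩
    · subst hay; subst hbx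
      exact ⟨c, hcx.1, hcx.2, key b hb hcx.1.symm, key a ha hcx.2.symm⟩
end

section
/- Let $G$ be a graph with a vertex $x$ of degree 6 such that the closed neighborhood $N[x]$ induces a complete graph $K_7$, and suppose $G$ contains two adjacent vertices $y, z$ outside $N[x]$ with at least 8 edges between $\{y,z\}$ and $N(x)$. Then $G$ has a $\mathcal{K}_9^{-6}$ minor. -/
open SimpleGraph

def myBaseF : Finset (Sym2 (Fin 9)) :=
  insert s(7,8) ((Finset.univ : Finset (Sym2 (Fin 9))).filter (fun e => ¬ e.IsDiag ∧ ∀ i ∈ e, i ≤ 6))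

lemma myBaseF_card : myBaseF.card = 22 := by decide

lemma mem_myBaseF {e : Sym2 (Fin 9)} :
    e ∈ myBaseF ↔ e = s(7,8) ∨ (¬ e.IsDiag ∧ ∀ i ∈ e, i ≤ 6) := by
  simp [myBaseF]

lemma myBaseF_nodiag : ∀ e ∈ myBaseF, ¬ e.IsDiag := by decide

/-- If `x` has degree 6, its closed neighborhood induces `K₇`, and there are two
adjacent vertices `y, z` outside `N[x]` sending at least 8 edges to `N(x)`,
then the graph has a `𝒦₉⁻⁶` minor. -/
theorem K7_neighborhood_plus_two_vertices
    {V : Type*} (G : SimpleGraph V) (x y z : V)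
    (hdeg : (G.neighborSet x).ncard = 6)
    (hclq : G.IsClique (insert x (G.neighborSet x)))
    (hy : y ∉ insert x (G.neighborSet x))
    (hz : z ∉ insert x (G.neighborSet x))
    (hyz : G.Adj y z)
    (hedges : 8 ≤ Set.ncard
      {p : V × V | (p.1 = y ∨ p.1 = z) ∧ p.2 ∈ G.neighborSet x ∧ G.Adj p.1 p.2}) :
    HasK96Minor G := by
  classical
  set s : Set V := G.neighborSet x with hsdef
  have hfin : s.Finite := Set.finite_of_ncard_ne_zero (by rw [hdeg]; norm_num)
  haveI : Fintype s := hfin.fintype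
  have hcard : Fintype.card s = 6 := by
    rw [← Set.toFinset_card, ← Set.ncard_eq_toFinset_card']; exact hdeg
  let eqv : s ≃ Fin 6 := Fintype.equivFinOfCardEq hcard
  -- basic non-membership facts
  have hxs : x ∉ s := fun h => G.irrefl h
  have hyx : y ≠ x := fun h => hy (by rw [h]; exact Set.mem_insert x _)
  have hys : y ∉ s := fun h => hy (Set.mem_insert_of_mem _ h)
  have hzx : z ≠ x := fun h => hz (by rw [h]; exact Set.mem_insert x _)
  have hzs : z ∉ s := fun h => hz (Set.mem_insert_of_mem _ h)
  have hyz' : y ≠ z := hyz.ne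
  -- the vertex map
  set v : Fin 9 → V := fun i =>
    if h : (i : ℕ) < 6 then (eqv.symm ⟨i, h⟩ : V)
    else if i = 7 then y else if i = 8 then z else x with hvdef
  have hvlt : ∀ (i : Fin 9) (h : (i : ℕ) < 6), v i = (eqv.symm ⟨i, h⟩ : V) := by
    intro i h; simp [hvdef, h]
  have hvmem : ∀ (i : Fin 9), (i : ℕ) < 6 → v i ∈ s := by
    intro i h; rw [hvlt i h]; exact (eqv.symm ⟨i, h⟩).2
  have hv6 : v 6 = x := by simp [hvdef, show ¬((6:Fin 9):ℕ) < 6 by decide]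
  have hv7 : v 7 = y := by simp [hvdef, show ¬((7:Fin 9):ℕ) < 6 by decide]
  have hv8 : v 8 = z := by simp [hvdef, show ¬((8:Fin 9):ℕ) < 6 by decide, show (8:Fin 9) ≠ 7 by decide]
  have hvout : ∀ i : Fin 9, ¬ (i : ℕ) < 6 →
      (i = 6 ∧ v i = x) ∨ (i = 7 ∧ v i = y) ∨ (i = 8 ∧ v i = z) := by
    intro i hi
    have h9 : (i : ℕ) < 9 := i.isLt
    have : (i : ℕ) = 6 ∨ (i : ℕ) = 7 ∨ (i : ℕ) = 8 := by omega
    rcases this with h | h | h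
    · have : i = 6 := Fin.ext (by rw [h]; decide)
      exact Or.inl ⟨this, this ▸ hv6⟩
    · have : i = 7 := Fin.ext (by rw [h]; decide)
      exact Or.inr (Or.inl ⟨this, this ▸ hv7⟩)
    · have : i = 8 := Fin.ext (by rw [h]; decide)
      exact Or.inr (Or.inr ⟨this, this ▸ hv8⟩)
  have hvnotmem : ∀ i : Fin 9, ¬ (i : ℕ) < 6 → v i ∉ s := by
    intro i hi
    rcases hvout i hi with ⟨_, h⟩ | ⟨_, h⟩ | ⟨_, h⟩ <;> rw [h] <;> assumption
  have hvinj : Function.Injective v := by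
    intro a b hab
    by_cases ha : (a : ℕ) < 6 <;> by_cases hb : (b : ℕ) < 6
    · rw [hvlt a ha, hvlt b hb] at hab
      have := eqv.symm.injective (Subtype.coe_injective hab)
      exact Fin.ext (by simpa [Fin.ext_iff] using this)
    · exact absurd (hab ▸ hvmem a ha) (hvnotmem b hb)
    · exact absurd (hab.symm ▸ hvmem b hb) (hvnotmem a ha)
    · rcases hvout a ha with ⟨ha', hva⟩ | ⟨ha', hva⟩ | ⟨ha', hva⟩ <;>
        rcases hvout b hb with ⟨hb', hvb⟩ | ⟨hb', hvb⟩ | ⟨hb', hvb⟩ <;>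
          rw [hva, hvb] at hab <;> first
            | (exact ha' ▸ hb' ▸ rfl)
            | (exact absurd hab (by tauto))
            | (exact absurd hab.symm (by tauto))
  -- the edge set
  set S : Set (V × V) :=
    {p : V × V | (p.1 = y ∨ p.1 = z) ∧ p.2 ∈ G.neighborSet x ∧ G.Adj p.1 p.2} with hSdef
  have hSfin : S.Finite := by
    apply Set.Finite.subset (Set.Finite.prod ((Set.finite_singleton y).insert z) hfin)
    rintro ⟨a, b⟩ ⟨h1, h2, _⟩
    refine ⟨?_, h2⟩
    simp only [Set.mem_insert_iff, Set.mem_singleton_iff]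
    tauto
  obtain ⟨T, hTS, hT8⟩ := Set.exists_subset_card_eq hedges
  have hTfin : T.Finite := hSfin.subset hTS
  set jdx : V → Fin 9 := fun b =>
    if h : b ∈ s then Fin.castLE (by norm_num) (eqv ⟨b, h⟩) else 0 with hjdef
  set idx1 : V → Fin 9 := fun a => if a = y then 7 else 8 with hidef
  have hjlt : ∀ b ∈ s, ((jdx b : ℕ) < 6) := by
    intro b hb; simpa [hjdef, hb] using (eqv ⟨b, hb⟩).isLt
  have hvj : ∀ b ∈ s, v (jdx b) = b := by
    intro b hb
    rw [hvlt _ (hjlt b hb)]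
    have : (⟨(jdx b : ℕ), hjlt b hb⟩ : Fin 6) = eqv ⟨b, hb⟩ := by
      simp [hjdef, hb]
    rw [this, Equiv.symm_apply_apply]
  have hi1 : ∀ a, a = y ∨ a = z → ((idx1 a : ℕ) = 7 ∨ (idx1 a : ℕ) = 8) := by
    intro a ha; by_cases h : a = y <;> simp [hidef, h] <;> decide
  have hvi : ∀ a, a = y ∨ a = z → v (idx1 a) = a := by
    intro a ha
    rcases ha with h | h <;> rw [h]
    · have h7 : idx1 y = 7 := by simp [hidef]
      rw [h7, hv7]
    · have h8 : idx1 z = 8 := by simp [hidef, Ne.symm hyz']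
      rw [h8, hv8]
  set ψ : V × V → Sym2 (Fin 9) := fun p => s(idx1 p.1, jdx p.2) with hpsidef
  have hSrec : ∀ p ∈ S, p.1 = v (idx1 p.1) ∧ p.2 = v (jdx p.2) := by
    rintro p ⟨h1, h2, _⟩
    exact ⟨(hvi p.1 h1).symm, (hvj p.2 h2).symm⟩
  have hinjT : Set.InjOn ψ T := by
    intro p hp q hq hpq
    have hp' := hTS hp
    have hq' := hTS hq
    simp only [hpsidef, Sym2.eq_iff] at hpq
    have hne : ∀ (a b : V), a = y ∨ a = z → b ∈ s → idx1 a ≠ jdx b := by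
      intro a b ha hb h
      have := hjlt b hb
      rcases hi1 a ha with h7 | h7 <;> rw [← h, h7] at this <;> omega
    rcases hpq with ⟨h1, h2⟩ | ⟨h1, h2⟩
    · obtain ⟨hp1, hp2⟩ := hSrec p hp'
      obtain ⟨hq1, hq2⟩ := hSrec q hq'
      exact Prod.ext (by rw [hp1, hq1, h1]) (by rw [hp2, hq2, h2])
    · exact absurd h1 (hne p.1 q.2 hp'.1 hq'.2.1)
  set E : Set (Sym2 (Fin 9)) := ↑myBaseF ∪ ψ '' T with hEdef
  -- ψ-edges: endpoints info
  have hpsimem : ∀ p ∈ S, (idx1 p.1 : ℕ) ≥ 7 ∧ (jdx p.2 : ℕ) < 6 := by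
    intro p hp
    constructor
    · rcases hi1 p.1 hp.1 with h | h <;> omega
    · exact hjlt p.2 hp.2.1
  have hEnodiag : ∀ e ∈ E, ¬ e.IsDiag := by
    intro e he
    rcases he with he | ⟨p, hp, rfl⟩
    · exact myBaseF_nodiag e he
    · obtain ⟨h1, h2⟩ := hpsimem p (hTS hp)
      simp only [hpsidef, Sym2.isDiag_iff_proj_eq]
      intro h; rw [h] at h1; omega
  refine ⟨SimpleGraph.fromEdgeSet E, ?_, fun b => {v b}, fun b => ⟨v b, rfl⟩, ?_, ?_, ?_⟩
  · -- edge count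
    have hES : (SimpleGraph.fromEdgeSet E).edgeSet = E := by
      rw [edgeSet_fromEdgeSet, sdiff_eq_left]
      rw [Set.disjoint_left]
      intro e he hd
      exact hEnodiag e he hd
    rw [hES, hEdef]
    have hdisj : Disjoint (↑myBaseF : Set (Sym2 (Fin 9))) (ψ '' T) := by
      rw [Set.disjoint_right]
      rintro e ⟨p, hp, rfl⟩ hmem
      obtain ⟨h1, h2⟩ := hpsimem p (hTS hp)
      rcases mem_myBaseF.1 hmem with h | ⟨_, h⟩
      · simp only [hpsidef, Sym2.eq_iff] at h
        rcases h with ⟨_, hb⟩ | ⟨_, hb⟩ <;> rw [hb] at h2 <;> exact absurd h2 (by decide)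
      · have hle := h (idx1 p.1) (Sym2.mem_mk_left _ _)
        have hle' := Fin.le_def.mp hle
        have h6 : ((6 : Fin 9) : ℕ) = 6 := by decide
        rw [h6] at hle'
        omega
    rw [Set.ncard_union_eq hdisj (myBaseF.finite_toSet) (hTfin.image ψ),
      Set.ncard_coe_finset, myBaseF_card, Set.ncard_image_of_injOn hinjT, hT8]
  · -- connectivity of singletons
    intro b
    haveI : Nonempty (↥({v b} : Set V)) := ⟨⟨v b, rfl⟩⟩
    refine ⟨?_⟩
    intro a c
    have : a = c := Subtype.ext (a.2.trans c.2.symm)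
    rw [this]
  · -- pairwise disjoint
    intro b1 b2 hne
    rw [Set.disjoint_singleton]
    exact fun h => hne (hvinj h)
  · -- adjacency
    intro b1 b2 hadj
    rw [fromEdgeSet_adj] at hadj
    obtain ⟨hmem, hne⟩ := hadj
    refine ⟨v b1, rfl, v b2, rfl, ?_⟩
    rcases hmem with hmem | ⟨p, hp, hpE⟩
    · rcases mem_myBaseF.1 hmem with h | ⟨_, h⟩
      · rw [Sym2.eq_iff] at h
        rcases h with ⟨h1, h2⟩ | ⟨h1, h2⟩ <;> rw [h1, h2]
        · rw [hv7, hv8]; exact hyz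
        · rw [hv8, hv7]; exact hyz.symm
      · have h1 : b1 ≤ 6 := h b1 (Sym2.mem_mk_left _ _)
        have h2 : b2 ≤ 6 := h b2 (Sym2.mem_mk_right _ _)
        have hmemins : ∀ i : Fin 9, i ≤ 6 → v i ∈ insert x s := by
          intro i hi
          by_cases hlt : (i : ℕ) < 6
          · exact Set.mem_insert_of_mem _ (hvmem i hlt)
          · rcases hvout i hlt with ⟨_, hv⟩ | ⟨hi7, _⟩ | ⟨hi8, _⟩
            · rw [hv]; exact Set.mem_insert x _
            · exact absurd (hi7 ▸ hi) (by decide)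
            · exact absurd (hi8 ▸ hi) (by decide)
        exact hclq (hmemins b1 h1) (hmemins b2 h2) (fun hc => hne (hvinj hc))
    · have hp' := hTS hp
      obtain ⟨hS1, hS2, hS3⟩ := hp'
      simp only [hpsidef, Sym2.eq_iff] at hpE
      rcases hpE with ⟨h1, h2⟩ | ⟨h1, h2⟩
      · rw [← h1, ← h2, hvi p.1 hS1, hvj p.2 hS2]; exact hS3
      · rw [← h1, ← h2, hvi p.1 hS1, hvj p.2 hS2]; exact hS3.symm
end
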